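/- Let a > 0 and m < 0 be real constants, and let Z : [−1, 1] → ℝ be the C¹ solution of the linear ODE Z'(x) = (a/(2|m|))·sin(πx) − (a²/(2|m|))·Z(x) with Z(−1) = 0. Then Z(x) = (a/(2|m|))·e^{−a²x/(2|m|)}·∫_{−1}^{x} sin(πt)·e^{a²t/(2|m|)} dt, and Z(1) = 2π·a·|m|·(1 − e^{−a²/|m|}) / (4π²m² + a⁴) > 0. -/

import Mathlib

open Real

private lemma lbf_key (a b : ℝ) (ha : a ≠ 0) (hb : b ≠ 0) :
    (a / (2 * b)) * Real.exp (-(a ^ 2 / (2 * b))) *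
      (π * ((Real.exp (-(a ^ 2 / (2 * b))))⁻¹ - Real.exp (-(a ^ 2 / (2 * b)))) /
        ((a ^ 2 / (2 * b)) ^ 2 + π ^ 2)) =
    2 * π * a * b * (1 - Real.exp (-(a ^ 2 / (2 * b))) * Real.exp (-(a ^ 2 / (2 * b)))) /
      (4 * π ^ 2 * b ^ 2 + a ^ 4) := by
  have hpi := Real.pi_pos
  set E := Real.exp (-(a ^ 2 / (2 * b))) with hE
  have hE0 : E ≠ 0 := (Real.exp_pos _).ne'
  have h1 : (a ^ 2 / (2 * b)) ^ 2 + π ^ 2 ≠ 0 := by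
    intro h
    nlinarith [sq_nonneg (a ^ 2 / (2 * b))]
  have h2 : 4 * π ^ 2 * b ^ 2 + a ^ 4 ≠ 0 := by
    have ha4 : 0 < a ^ 4 := by positivity
    intro h
    nlinarith [sq_nonneg (π * b)]
  field_simp
  ring

/-- The linearization `Z = ∂y/∂β |_{β=0}` of the backward flow: the solution of
`Z' = (a/(2|m|)) sin(πx) − (a²/(2|m|)) Z`, `Z(−1) = 0`, is given by the explicit
integral formula, and `Z(1) = 2πa|m|(1 − e^{−a²/|m|})/(4π²m² + a⁴) > 0`. -/
theorem linearized_backward_flow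
    (a m : ℝ) (ha : 0 < a) (hm : m < 0)
    (Z : ℝ → ℝ) (hZ0 : Z (-1) = 0)
    (hode : ∀ x ∈ Set.Icc (-1 : ℝ) 1,
      HasDerivAt Z ((a / (2 * |m|)) * sin (π * x) - (a ^ 2 / (2 * |m|)) * Z x) x) :
    (∀ x ∈ Set.Icc (-1 : ℝ) 1,
      Z x = (a / (2 * |m|)) * exp (-(a ^ 2 * x) / (2 * |m|)) *
        ∫ t in (-1 : ℝ)..x, sin (π * t) * exp ((a ^ 2 * t) / (2 * |m|))) ∧
    Z 1 = 2 * π * a * |m| * (1 - exp (-(a ^ 2) / |m|)) / (4 * π ^ 2 * m ^ 2 + a ^ 4) ∧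
    0 < Z 1 := by
  have hm0 : (0 : ℝ) < |m| := abs_pos.2 hm.ne
  have hm0' : (2 : ℝ) * |m| ≠ 0 := by positivity
  set c : ℝ := a ^ 2 / (2 * |m|) with hc
  set k : ℝ := a / (2 * |m|) with hk
  have hcpos : 0 < c := by rw [hc]; positivity
  -- rewrite exponents in terms of c
  have harg : ∀ t : ℝ, (a ^ 2 * t) / (2 * |m|) = c * t := by
    intro t; rw [hc]; ring
  have harg' : ∀ t : ℝ, -(a ^ 2 * t) / (2 * |m|) = -(c * t) := by
    intro t; rw [hc]; ring
  -- the integrand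
  set f : ℝ → ℝ := fun t => sin (π * t) * exp (c * t) with hf
  have hfc : Continuous f := by
    rw [hf]; fun_prop
  set G : ℝ → ℝ := fun x => ∫ t in (-1 : ℝ)..x, f t with hG
  have hGd : ∀ x : ℝ, HasDerivAt G (f x) x := by
    intro x
    exact intervalIntegral.integral_hasDerivAt_right (hfc.intervalIntegrable _ _)
      hfc.aestronglyMeasurable.stronglyMeasurableAtFilter hfc.continuousAt
  -- derivative of x ↦ exp (c * x)
  have hexpd : ∀ x : ℝ, HasDerivAt (fun x => exp (c * x)) (c * exp (c * x)) x := by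
    intro x
    have := ((hasDerivAt_id x).const_mul c).exp
    simpa [mul_comm] using this
  -- the integrating-factor combination W is constant
  set W : ℝ → ℝ := fun x => Z x * exp (c * x) - k * G x with hW
  have hWd : ∀ x ∈ Set.Icc (-1 : ℝ) 1, HasDerivAt W 0 x := by
    intro x hx
    have h1 := ((hode x hx).mul (hexpd x)).sub ((hGd x).const_mul k)
    refine HasDerivAt.congr_deriv h1 ?_
    rw [hf, hk, hc]
    ring
  have hWcont : ContinuousOn W (Set.Icc (-1 : ℝ) 1) := fun x hx =>
    (hWd x hx).continuousAt.continuousWithinAt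
  have hWconst : ∀ x ∈ Set.Icc (-1 : ℝ) 1, W x = W (-1) := by
    intro x hx
    exact constant_of_has_deriv_right_zero hWcont
      (fun y hy => (hWd y ⟨hy.1, hy.2.le⟩).hasDerivWithinAt) x hx
  have hWinit : W (-1) = 0 := by
    rw [hW]
    simp [hZ0, hG, intervalIntegral.integral_same]
  have hformula : ∀ x ∈ Set.Icc (-1 : ℝ) 1,
      Z x = k * exp (-(c * x)) * G x := by
    intro x hx
    have h := hWconst x hx
    rw [hWinit, hW] at h
    have h' : Z x * exp (c * x) - k * G x = 0 := h
    have hexp : exp (c * x) ≠ 0 := (exp_pos _).ne'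
    rw [exp_neg]
    field_simp
    linear_combination h'
  -- compute the integral G 1 explicitly
  have hZ1eq : Z 1 = 2 * π * a * |m| * (1 - exp (-(a ^ 2) / |m|)) / (4 * π ^ 2 * m ^ 2 + a ^ 4) := by
    have hD : (0 : ℝ) < c ^ 2 + π ^ 2 := by positivity
    have hD0 : c ^ 2 + π ^ 2 ≠ 0 := hD.ne'
    set F : ℝ → ℝ := fun t => exp (c * t) * (c * sin (π * t) - π * cos (π * t)) / (c ^ 2 + π ^ 2)
      with hF
    have hFd : ∀ t : ℝ, HasDerivAt F (f t) t := by
      intro t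
      have hsin : HasDerivAt (fun t => sin (π * t)) (π * cos (π * t)) t := by
        simpa [mul_comm] using ((hasDerivAt_id t).const_mul π).sin
      have hcos : HasDerivAt (fun t => cos (π * t)) (-(π * sin (π * t))) t := by
        simpa [mul_comm, mul_assoc] using ((hasDerivAt_id t).const_mul π).cos
      have h1 : HasDerivAt (fun t => c * sin (π * t) - π * cos (π * t))
          (c * (π * cos (π * t)) - π * (-(π * sin (π * t)))) t :=
        (hsin.const_mul c).sub (hcos.const_mul π)
      have h2 := ((hexpd t).mul h1).div_const (c ^ 2 + π ^ 2)
      refine HasDerivAt.congr_deriv h2 ?_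
      rw [hf]
      field_simp
      ring
    have hG1 : G 1 = π * (exp c - exp (-c)) / (c ^ 2 + π ^ 2) := by
      show (∫ t in (-1 : ℝ)..(1 : ℝ), f t) = _
      rw [intervalIntegral.integral_eq_sub_of_hasDerivAt (fun t _ => hFd t)
        (hfc.intervalIntegrable _ _)]
      rw [hF]
      simp [mul_one, mul_neg_one, Real.sin_pi, Real.cos_pi]
      ring
    have hZ1 : Z 1 = k * exp (-c) * (π * (exp c - exp (-c)) / (c ^ 2 + π ^ 2)) := by
      have := hformula 1 ⟨by norm_num, le_refl 1⟩
      rw [this, hG1, mul_one]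
    have hEE : exp (-(a ^ 2) / |m|) = exp (-(a ^ 2 / (2 * |m|))) * exp (-(a ^ 2 / (2 * |m|))) := by
      rw [← Real.exp_add]
      congr 1
      field_simp
      ring
    have hm2 : m ^ 2 = |m| ^ 2 := (sq_abs m).symm
    rw [hZ1, hEE, hm2, hk, hc]
    rw [show Real.exp (a ^ 2 / (2 * |m|)) = (Real.exp (-(a ^ 2 / (2 * |m|))))⁻¹ by
      rw [← Real.exp_neg, neg_neg]]
    exact lbf_key a |m| ha.ne' hm0.ne'
  refine ⟨?_, hZ1eq, ?_⟩
  · intro x hx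
    rw [hformula x hx, harg' x]
    congr 1
    rw [hG]
    apply intervalIntegral.integral_congr
    intro t _
    show sin (π * t) * exp (c * t) = sin (π * t) * exp ((a ^ 2 * t) / (2 * |m|))
    rw [harg t]
  · -- positivity
    rw [hZ1eq]
    have hlt : exp (-(a ^ 2) / |m|) < 1 := by
      rw [exp_lt_one_iff]
      have : 0 < a ^ 2 / |m| := by positivity
      rw [neg_div]
      linarith
    have hnum : 0 < 2 * π * a * |m| * (1 - exp (-(a ^ 2) / |m|)) := by
      have := pi_pos
      have h2 : 0 < 1 - exp (-(a ^ 2) / |m|) := by linarith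
      positivity
    have hden : 0 < 4 * π ^ 2 * m ^ 2 + a ^ 4 := by positivity
    exact div_pos hnum hden
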